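/- arXiv:2101.06401 — 2 statements merged into one kernel-verified Lean document; each statement's English description precedes it below -/
import Mathlib

section
/- Let n ≥ 3, m ≥ 2 be integers, α₀ = √((m−1)/(n−1)), β₁ = 1/(m(1+α₀²)+1) and β₂ = 2(n−1)/(m + (1+α₀²)^{−1}). If I ⊆ (0,∞) is an interval and z ∈ C¹(I) satisfies 1 + α₀² − α₀²·z(r) > 0 on I and the ODE (m + (1+α₀² − α₀²z)^{−1})·z'(r) = −2(n−1)·z(r)/r on I, then the function r ↦ (1 + α₀² − α₀²·z(r))^{−β₁} · z(r) · r^{β₂} is constant on I. -/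
open Set
noncomputable section

/-- `α₀ = √((m−1)/(n−1))`. -/
def alpha0 (n m : ℕ) : ℝ := Real.sqrt (((m : ℝ) - 1) / ((n : ℝ) - 1))

/-- `β₁ = 1/(m(1+α₀²)+1)`. -/
def beta1 (n m : ℕ) : ℝ := 1 / ((m : ℝ) * (1 + (alpha0 n m) ^ 2) + 1)

/-- `β₂ = 2(n−1)/(m + (1+α₀²)⁻¹)`. -/
def beta2 (n m : ℕ) : ℝ := 2 * ((n : ℝ) - 1) / ((m : ℝ) + (1 + (alpha0 n m) ^ 2)⁻¹)

/-- First integral of the ODE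
`(m + (1+α₀²−α₀²z)⁻¹) z' = −2(n−1) z/r`: along any `C¹` solution `z` on an interval
`I ⊆ (0,∞)` with `1+α₀²−α₀²z > 0`, the quantity
`(1+α₀²−α₀²z)^{−β₁} · z · r^{β₂}` is constant. -/
theorem ode_first_integral
    (n m : ℕ) (hn : 3 ≤ n) (hm : 2 ≤ m)
    (I : Set ℝ) (hI : I ⊆ Ioi 0) (hIc : I.OrdConnected)
    (z z' : ℝ → ℝ)
    (hz : ∀ r ∈ I, HasDerivWithinAt z (z' r) I r)
    (hz' : ContinuousOn z' I)
    (hposd : ∀ r ∈ I, 0 < 1 + (alpha0 n m) ^ 2 - (alpha0 n m) ^ 2 * z r)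
    (hode : ∀ r ∈ I,
      ((m : ℝ) + (1 + (alpha0 n m) ^ 2 - (alpha0 n m) ^ 2 * z r)⁻¹) * z' r
        = -2 * ((n : ℝ) - 1) * z r / r) :
    ∀ r ∈ I, ∀ s ∈ I,
      (1 + (alpha0 n m) ^ 2 - (alpha0 n m) ^ 2 * z r) ^ (-(beta1 n m)) * z r * r ^ (beta2 n m)
        = (1 + (alpha0 n m) ^ 2 - (alpha0 n m) ^ 2 * z s) ^ (-(beta1 n m)) * z s
            * s ^ (beta2 n m) := by
  set a := (alpha0 n m) ^ 2 with ha_def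
  have ha : 0 ≤ a := sq_nonneg _
  have hm1 : (2:ℝ) ≤ (m:ℝ) := by exact_mod_cast hm
  have h1a : (0:ℝ) < 1 + a := by linarith
  set b1 := beta1 n m with hb1_def
  set b2 := beta2 n m with hb2_def
  have hb1 : b1 = 1 / ((m:ℝ) * (1 + a) + 1) := rfl
  have hb2 : b2 = 2 * ((n:ℝ) - 1) / ((m:ℝ) + (1 + a)⁻¹) := rfl
  have hden1 : (m:ℝ) * (1 + a) + 1 ≠ 0 := by positivity
  have hden2 : (m:ℝ) + (1 + a)⁻¹ ≠ 0 := by positivity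
  set g : ℝ → ℝ := fun r => (1 + a - a * z r) ^ (-b1) * z r * r ^ b2 with hg
  have key : ∀ r ∈ I, HasDerivWithinAt g 0 I r := by
    intro r hr
    have hr0 : (0:ℝ) < r := hI hr
    have hA : (0:ℝ) < 1 + a - a * z r := hposd r hr
    have hAd : HasDerivWithinAt (fun x => 1 + a - a * z x) (-(a * z' r)) I r := by
      simpa using ((hz r hr).const_mul a).const_sub (1 + a)
    have h1 := hAd.rpow_const (p := -b1) (Or.inl hA.ne')
    have h2 : HasDerivWithinAt (fun x : ℝ => x ^ b2) (b2 * r ^ (b2 - 1)) I r :=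
      (Real.hasDerivAt_rpow_const (p := b2) (Or.inl hr0.ne')).hasDerivWithinAt
    have h3 := (h1.mul (hz r hr)).mul h2
    convert h3 using 1
    case e'_4 => rfl
    case e'_5 => rfl
    case e'_8 => rfl
    simp only [Pi.mul_apply]
    have hE : (0:ℝ) < (m:ℝ) + (1 + a - a * z r)⁻¹ := by positivity
    have hz'eq : z' r = (-2 * ((n:ℝ) - 1) * z r / r) / ((m:ℝ) + (1 + a - a * z r)⁻¹) := by
      rw [eq_div_iff hE.ne', mul_comm]
      exact hode r hr
    have e1 : (1 + a - a * z r) ^ (-b1 - 1)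
        = (1 + a - a * z r) ^ (-b1) / (1 + a - a * z r) := by
      rw [Real.rpow_sub hA, Real.rpow_one]
    have e2 : r ^ (b2 - 1) = r ^ b2 / r := by
      rw [Real.rpow_sub hr0, Real.rpow_one]
    have hP : (0:ℝ) < (1 + a - a * z r) ^ (-b1) := Real.rpow_pos_of_pos hA _
    have hR : (0:ℝ) < r ^ b2 := Real.rpow_pos_of_pos hr0 _
    rw [e1, e2, hz'eq, hb1, hb2]
    field_simp
    ring
  have hconv : Convex ℝ I := hIc.convex
  intro r hr s hs
  have hle := hconv.norm_image_sub_le_of_norm_hasDerivWithin_le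
    (f := g) (f' := fun _ => 0) (C := 0) key (fun x hx => by simp) hr hs
  have h0 : ‖g s - g r‖ ≤ 0 := by simpa using hle
  have : g s - g r = 0 := norm_le_zero_iff.mp h0
  have : g s = g r := by linarith [this]
  exact this.symm
end
end

section
/- Let α₀ > 0 and let φ ∈ C¹((0,∞)) satisfy φ(r) − r·φ'(r) > 0 and α₀·r < φ(r) < α₀·r + 1 for all r > 0, together with lim_{r↓0} φ(r) = 1. Then the map r ↦ φ(r)/r is strictly decreasing on (0,∞) and maps (0,∞) bijectively onto (α₀, ∞); in particular, for every s > α₀ there is exactly one r > 0 with φ(r) = s·r, i.e. the graph of φ meets every ray {(t, s·t) : t > 0} with s > α₀ in a single point (so the homothetic rescalings of the graph of φ foliate {(r,z) : z > α₀·r, r > 0}). -/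
open Set Filter
open scoped Topology

noncomputable section

/-- Foliation property: if `φ ∈ C¹((0,∞))` satisfies
`φ(r) − rφ'(r) > 0` and `α₀r < φ(r) < α₀r + 1` for all `r > 0`, and `φ(r) → 1` as
`r ↓ 0`, then `r ↦ φ(r)/r` is strictly decreasing on `(0,∞)` and maps `(0,∞)`
bijectively onto `(α₀,∞)`; in particular for every `s > α₀` there is exactly one
`r > 0` with `φ(r) = s·r`. -/
theorem graph_foliation
    (α₀ : ℝ) (hα₀ : 0 < α₀) (φ : ℝ → ℝ)
    (hdiff : ∀ r : ℝ, 0 < r → DifferentiableAt ℝ φ r)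
    (hC1 : ContinuousOn (deriv φ) (Ioi 0))
    (hconvexity : ∀ r : ℝ, 0 < r → 0 < φ r - r * deriv φ r)
    (hbounds : ∀ r : ℝ, 0 < r → α₀ * r < φ r ∧ φ r < α₀ * r + 1)
    (hlim : Tendsto φ (𝓝[>] (0 : ℝ)) (𝓝 1)) :
    StrictAntiOn (fun r => φ r / r) (Ioi 0) ∧
    BijOn (fun r => φ r / r) (Ioi 0) (Ioi α₀) ∧
    ∀ s : ℝ, α₀ < s → ∃! r : ℝ, 0 < r ∧ φ r = s * r := by
  set g : ℝ → ℝ := fun r => φ r / r with hg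
  have hgdiff : ∀ r : ℝ, 0 < r → DifferentiableAt ℝ g r := by
    intro r hr
    exact (hdiff r hr).div (differentiableAt_fun_id) hr.ne'
  have hgcont : ContinuousOn g (Ioi 0) := fun r hr =>
    ((hgdiff r hr).continuousAt).continuousWithinAt
  have hderiv : ∀ r : ℝ, 0 < r → deriv g r < 0 := by
    intro r hr
    have : deriv g r = (deriv φ r * r - φ r * 1) / r ^ 2 := by
      simp only [hg]
      rw [deriv_fun_div (hdiff r hr) differentiableAt_fun_id hr.ne']
      simp
    rw [this]
    apply div_neg_of_neg_of_pos
    · have := hconvexity r hr; nlinarith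
    · positivity
  have hanti : StrictAntiOn g (Ioi 0) := by
    apply strictAntiOn_of_deriv_neg (convex_Ioi 0) hgcont
    intro x hx
    rw [interior_Ioi] at hx
    exact hderiv x hx
  -- small r: φ r > 1/2
  obtain ⟨δ, hδpos, hδ⟩ : ∃ δ > 0, ∀ r : ℝ, 0 < r → r < δ → (1:ℝ)/2 < φ r := by
    have := hlim (Ioi_mem_nhds (by norm_num : (1:ℝ)/2 < 1))
    rw [mem_map, Metric.mem_nhdsWithin_iff] at this
    obtain ⟨δ, hδpos, hδ⟩ := this
    refine ⟨δ, hδpos, fun r hr hrδ => ?_⟩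
    have : r ∈ Metric.ball (0:ℝ) δ ∩ Ioi 0 := ⟨by
      simp only [Metric.mem_ball, Real.dist_eq, sub_zero, abs_of_pos hr]; exact hrδ, hr⟩
    exact hδ this
  -- surjectivity helper
  have hsurj : ∀ s : ℝ, α₀ < s → ∃ r ∈ Ioi (0:ℝ), g r = s := by
    intro s hs
    have hspos : 0 < s := hα₀.trans hs
    set r₁ : ℝ := min (δ/2) (1/(2*s)) with hr₁def
    have hr₁pos : 0 < r₁ := lt_min (by linarith) (by positivity)
    have hgr₁ : s < g r₁ := by
      have h1 : φ r₁ > 1/2 := hδ r₁ hr₁pos (lt_of_le_of_lt (min_le_left _ _) (by linarith))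
      have h2 : r₁ ≤ 1/(2*s) := min_le_right _ _
      have : s ≤ (1/2) / r₁ := by
        rw [le_div_iff₀ hr₁pos]
        calc s * r₁ ≤ s * (1/(2*s)) := by nlinarith
          _ = 1/2 := by field_simp
      calc s ≤ (1/2) / r₁ := this
        _ < φ r₁ / r₁ := by gcongr
        _ = g r₁ := rfl
    set r₂ : ℝ := max r₁ (1/(s-α₀)) with hr₂def
    have hr₂pos : 0 < r₂ := lt_of_lt_of_le hr₁pos (le_max_left _ _)
    have hgr₂ : g r₂ < s := by
      have hb := (hbounds r₂ hr₂pos).2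
      have h2 : 1/(s-α₀) ≤ r₂ := le_max_right _ _
      have hsα : 0 < s - α₀ := by linarith
      have : 1/r₂ ≤ s - α₀ := by
        rw [div_le_iff₀ hr₂pos]
        rw [div_le_iff₀ hsα] at h2
        linarith
      have : g r₂ < α₀ + 1/r₂ := by
        simp only [hg]
        rw [div_lt_iff₀ hr₂pos]
        have : (α₀ + 1/r₂) * r₂ = α₀ * r₂ + 1 := by field_simp
        linarith [this]
      linarith
    have hle : r₁ ≤ r₂ := le_max_left _ _
    have := intermediate_value_Icc' hle (hgcont.mono (fun x hx => lt_of_lt_of_le hr₁pos hx.1))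
    have hmem : s ∈ Icc (g r₂) (g r₁) := ⟨le_of_lt hgr₂, le_of_lt hgr₁⟩
    obtain ⟨r, hr, hgr⟩ := this hmem
    exact ⟨r, lt_of_lt_of_le hr₁pos hr.1, hgr⟩
  have hmaps : MapsTo g (Ioi 0) (Ioi α₀) := by
    intro r hr
    have := (hbounds r hr).1
    simp only [hg, mem_Ioi]
    rw [lt_div_iff₀ hr]
    linarith [this]
  have hbij : BijOn g (Ioi 0) (Ioi α₀) := by
    refine ⟨hmaps, hanti.injOn, ?_⟩
    intro s hs
    obtain ⟨r, hr, hgr⟩ := hsurj s hs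
    exact ⟨r, hr, hgr⟩
  refine ⟨hanti, hbij, ?_⟩
  intro s hs
  obtain ⟨r, hr, hgr⟩ := hsurj s hs
  refine ⟨r, ⟨hr, ?_⟩, ?_⟩
  · have : φ r / r = s := hgr
    rw [div_eq_iff (ne_of_gt (mem_Ioi.mp hr))] at this
    exact this
  · rintro r' ⟨hr', hφr'⟩
    apply hanti.injOn (mem_Ioi.mpr hr') hr
    have h1 : g r' = s := by
      simp only [hg]
      rw [hφr']
      field_simp
    exact h1.trans hgr.symm
end
end
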